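/- arXiv:1109.4731 — 3 statements merged into one kernel-verified Lean document; each statement's English description precedes it below -/
import Mathlib

section
/- Perfectness of GSS: for every finite simple graph G and every set of players B, either B is authorised (can always recover the secret from its shares) or B is forbidden (the joint distribution of its shares under uniformly random keys is independent of the secret). -/
variable {V : Type*} [Fintype V] [DecidableEq V]

def oddNbhd (G : SimpleGraph V) [DecidableRel G.Adj] (D : Finset V) : Finset V :=
  Finset.univ.filter fun v => Odd (G.neighborFinset v ∩ D).card

def cAccessing (G : SimpleGraph V) [DecidableRel G.Adj] (B : Finset V) : Prop :=
  ∃ D ⊆ B, Odd D.card ∧ oddNbhd G D ⊆ B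

def authorised (G : SimpleGraph V) [DecidableRel G.Adj] (B : Finset V) : Prop :=
  ∃ f : (B → ZMod 2 × ZMod 2) → ZMod 2,
    ∀ (s : ZMod 2) (k : V → ZMod 2),
      f (fun i => (k i.1, s + ∑ j ∈ G.neighborFinset i.1, k j)) = s

def forbidden (G : SimpleGraph V) [DecidableRel G.Adj] (B : Finset V) : Prop :=
  ∀ (s s' : ZMod 2) (t : B → ZMod 2 × ZMod 2),
    (Finset.univ.filter fun k : V → ZMod 2 =>
        (fun i : B => (k i.1, s + ∑ j ∈ G.neighborFinset i.1, k j)) = t).card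
      = (Finset.univ.filter fun k : V → ZMod 2 =>
        (fun i : B => (k i.1, s' + ∑ j ∈ G.neighborFinset i.1, k j)) = t).card

lemma cast_parity (n : ℕ) : ((n : ZMod 2) = 1) ↔ Odd n := by
  rw [Nat.odd_iff, ← ZMod.natCast_mod]
  rcases Nat.mod_two_eq_zero_or_one n with h | h <;> rw [h] <;> simp

lemma cast_parity' (n : ℕ) : ((n : ZMod 2)) = if Odd n then 1 else 0 := by
  rcases Nat.even_or_odd n with h | h
  · have h2 := Nat.even_iff.mp h
    simp [← ZMod.natCast_mod, h2, Nat.not_odd_iff_even.mpr h]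
  · simp [h, (cast_parity n).mpr h]

lemma zmod2_cases : ∀ a : ZMod 2, a = 0 ∨ a = 1 := by decide

lemma zmod2_ne_zero {a : ZMod 2} (h : a ≠ 0) : a = 1 := by revert h; revert a; decide

lemma filter_mem_eq {B D : Finset V} (hDB : D ⊆ B) : B.filter (fun v => v ∈ D) = D := by
  ext v; simp only [Finset.mem_filter]; exact ⟨fun h => h.2, fun h => ⟨hDB h, h⟩⟩

/-- Key double-counting identity. -/
lemma key_sum (G : SimpleGraph V) [DecidableRel G.Adj] (D : Finset V) (k : V → ZMod 2) :
    ∑ i ∈ D, ∑ j ∈ G.neighborFinset i, k j = ∑ j ∈ oddNbhd G D, k j := by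
  have h1 : ∀ i, ∑ j ∈ G.neighborFinset i, k j = ∑ j : V, if G.Adj i j then k j else 0 := by
    intro i; rw [SimpleGraph.neighborFinset_eq_filter, Finset.sum_filter]
  have hset : ∀ j, G.neighborFinset j ∩ D = D.filter (fun i => G.Adj i j) := by
    intro j; ext i
    simp only [Finset.mem_inter, SimpleGraph.mem_neighborFinset, Finset.mem_filter, G.adj_comm]
    tauto
  calc ∑ i ∈ D, ∑ j ∈ G.neighborFinset i, k j
      = ∑ i ∈ D, ∑ j : V, if G.Adj i j then k j else 0 := by simp_rw [h1]
    _ = ∑ j : V, ∑ i ∈ D, if G.Adj i j then k j else 0 := Finset.sum_comm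
    _ = ∑ j : V, ((G.neighborFinset j ∩ D).card : ZMod 2) * k j := by
        refine Finset.sum_congr rfl fun j _ => ?_
        rw [hset, ← Finset.sum_filter, Finset.sum_const, nsmul_eq_mul]
    _ = ∑ j : V, (if Odd (G.neighborFinset j ∩ D).card then 1 else 0) * k j := by
        simp_rw [cast_parity']
    _ = ∑ j ∈ oddNbhd G D, k j := by
        rw [oddNbhd, Finset.sum_filter]
        refine Finset.sum_congr rfl fun j _ => ?_
        split <;> simp

lemma sum_coe {B D : Finset V} (hDB : D ⊆ B) (g : V → ZMod 2) :
    ∑ i ∈ Finset.univ.filter (fun i : B => i.1 ∈ D), g i.1 = ∑ i ∈ D, g i := by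
  rw [Finset.sum_filter, Finset.univ_eq_attach,
    Finset.sum_attach B (fun v => if v ∈ D then g v else 0),
    ← Finset.sum_filter, filter_mem_eq hDB]

lemma authorised_of_cAccessing (G : SimpleGraph V) [DecidableRel G.Adj] (B : Finset V)
    (h : cAccessing G B) : authorised G B := by
  obtain ⟨D, hDB, hodd, hN⟩ := h
  refine ⟨fun t => (∑ i ∈ Finset.univ.filter (fun i : B => i.1 ∈ D), (t i).2)
    + ∑ i ∈ Finset.univ.filter (fun i : B => i.1 ∈ oddNbhd G D), (t i).1, fun s k => ?_⟩
  simp only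
  rw [sum_coe hDB (fun v => s + ∑ j ∈ G.neighborFinset v, k j), sum_coe hN k]
  rw [Finset.sum_add_distrib, Finset.sum_const, key_sum, nsmul_eq_mul,
    (cast_parity D.card).mpr hodd, one_mul, add_assoc, CharTwo.add_self_eq_zero, add_zero]

/-- The sharing map as a linear map. -/
noncomputable def shareMap (G : SimpleGraph V) [DecidableRel G.Adj] (B : Finset V) :
    (V → ZMod 2) →ₗ[ZMod 2] (B → ZMod 2 × ZMod 2) where
  toFun k i := (k i.1, ∑ j ∈ G.neighborFinset i.1, k j)
  map_add' k l := by funext i; simp [Finset.sum_add_distrib, Prod.ext_iff]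
  map_smul' c k := by funext i; simp [Finset.mul_sum, Prod.ext_iff]

lemma cAccessing_of_notMem (G : SimpleGraph V) [DecidableRel G.Adj] (B : Finset V)
    (h : (fun _ : B => ((0 : ZMod 2), (1 : ZMod 2))) ∉ LinearMap.range (shareMap G B)) :
    cAccessing G B := by
  obtain ⟨φ, hφe, hφ0⟩ := Submodule.exists_dual_map_eq_bot_of_notMem h inferInstance
  rw [← LinearMap.le_ker_iff_map] at hφ0
  set a : B → ZMod 2 := fun i => φ (Pi.single i (1, 0)) with ha
  set b : B → ZMod 2 := fun i => φ (Pi.single i (0, 1)) with hb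
  have hdecomp : ∀ t : B → ZMod 2 × ZMod 2, φ t = ∑ i, ((t i).1 * a i + (t i).2 * b i) := by
    intro t
    conv_lhs => rw [← Finset.univ_sum_single t]
    rw [map_sum]
    refine Finset.sum_congr rfl fun i _ => ?_
    have hsingle : Pi.single i (t i) =
        (t i).1 • (Pi.single i ((1 : ZMod 2), (0 : ZMod 2)) : B → ZMod 2 × ZMod 2)
        + (t i).2 • (Pi.single i ((0 : ZMod 2), (1 : ZMod 2)) : B → ZMod 2 × ZMod 2) := by
      funext j
      by_cases hij : j = i <;> simp [Pi.single_apply, hij, Prod.ext_iff]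
    rw [hsingle, map_add, map_smul, map_smul, smul_eq_mul, smul_eq_mul]
  set aa : V → ZMod 2 := fun v => if h : v ∈ B then a ⟨v, h⟩ else 0 with haa
  set bb : V → ZMod 2 := fun v => if h : v ∈ B then b ⟨v, h⟩ else 0 with hbb
  set D : Finset V := Finset.univ.filter (fun v => bb v = 1) with hD
  have hDB : D ⊆ B := by
    intro v hv
    simp only [hD, Finset.mem_filter, hbb] at hv
    by_contra hvB
    simp [hvB] at hv
  have hbbD : ∀ v, bb v = if v ∈ D then 1 else 0 := by
    intro v
    by_cases hv : bb v = 1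
    · simp [hD, hv]
    · simp [hD, hv, (zmod2_cases (bb v)).resolve_right hv]
  have hsum_bb : ∀ g : V → ZMod 2, ∑ i : B, g i.1 * b i = ∑ v ∈ B, g v * bb v := by
    intro g
    rw [← Finset.sum_attach B (fun v => g v * bb v), Finset.univ_eq_attach]
    refine Finset.sum_congr rfl fun i _ => ?_
    simp [hbb, i.2]
  have master : ∀ k : V → ZMod 2,
      (∑ v ∈ B, aa v * k v) + ∑ j ∈ oddNbhd G D, k j = 0 := by
    intro k
    have h0 : φ (shareMap G B k) = 0 := hφ0 (LinearMap.mem_range_self _ k)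
    rw [hdecomp] at h0
    have e1 : ∑ i : B, ((shareMap G B k i).1 * a i + (shareMap G B k i).2 * b i)
        = (∑ i : B, k i.1 * a i) + ∑ i : B, (∑ j ∈ G.neighborFinset i.1, k j) * b i := by
      rw [← Finset.sum_add_distrib]; rfl
    rw [e1] at h0
    have e2 : ∑ i : B, k i.1 * a i = ∑ v ∈ B, aa v * k v := by
      rw [← Finset.sum_attach B (fun v => aa v * k v), Finset.univ_eq_attach]
      refine Finset.sum_congr rfl fun i _ => ?_
      simp [haa, i.2, mul_comm]
    have e3 : ∑ i : B, (∑ j ∈ G.neighborFinset i.1, k j) * b i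
        = ∑ j ∈ oddNbhd G D, k j := by
      rw [hsum_bb (fun v => ∑ j ∈ G.neighborFinset v, k j), ← key_sum G D k]
      calc ∑ v ∈ B, (∑ j ∈ G.neighborFinset v, k j) * bb v
          = ∑ v ∈ B, if v ∈ D then ∑ j ∈ G.neighborFinset v, k j else 0 := by
            refine Finset.sum_congr rfl fun v _ => ?_
            rw [hbbD v]; split <;> simp
        _ = ∑ v ∈ D, ∑ j ∈ G.neighborFinset v, k j := by
            rw [← Finset.sum_filter, filter_mem_eq hDB]
    rw [e2, e3] at h0
    exact h0
  refine ⟨D, hDB, ?_, ?_⟩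
  · have he : φ (fun _ : B => ((0 : ZMod 2), (1 : ZMod 2))) = 1 := zmod2_ne_zero hφe
    rw [hdecomp] at he
    simp only [zero_mul, one_mul, zero_add] at he
    have hcard : ∑ i : B, b i = ((D.card : ZMod 2)) := by
      have := hsum_bb (fun _ => 1)
      simp only [one_mul] at this
      rw [this]
      calc ∑ v ∈ B, bb v = ∑ v ∈ B, if v ∈ D then (1 : ZMod 2) else 0 :=
            Finset.sum_congr rfl fun v _ => hbbD v
        _ = ∑ _v ∈ D, (1 : ZMod 2) := by rw [← Finset.sum_filter, filter_mem_eq hDB]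
        _ = (D.card : ZMod 2) := by rw [Finset.sum_const, nsmul_eq_mul, mul_one]
    rw [hcard] at he
    exact (cast_parity _).mp he
  · intro v hv
    by_contra hvB
    set k0 : V → ZMod 2 := Pi.single v 1 with hk0
    have hm := master k0
    rw [hk0, Finset.sum_pi_single' v 1 (oddNbhd G D), if_pos hv] at hm
    have hz : ∑ u ∈ B, aa u * k0 u = 0 := by
      refine Finset.sum_eq_zero fun u hu => ?_
      rw [hk0, Pi.single_apply]
      by_cases huv : u = v
      · subst huv; exact absurd hu hvB
      · simp [huv]
    rw [hz, zero_add] at hm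
    exact one_ne_zero hm

theorem gss_perfect (G : SimpleGraph V) [DecidableRel G.Adj] (B : Finset V) :
    authorised G B ∨ forbidden G B := by
  by_cases hc : cAccessing G B
  · exact Or.inl (authorised_of_cAccessing G B hc)
  · right
    -- get the translation vector x
    have hmem : (fun _ : B => ((0 : ZMod 2), (1 : ZMod 2))) ∈ LinearMap.range (shareMap G B) := by
      by_contra hnm
      exact hc (cAccessing_of_notMem G B hnm)
    obtain ⟨x, hx⟩ := hmem
    have hx1 : ∀ i : B, x i.1 = 0 := fun i => congrArg Prod.fst (congrFun hx i)
    have hx2 : ∀ i : B, ∑ j ∈ G.neighborFinset i.1, x j = 1 :=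
      fun i => congrArg Prod.snd (congrFun hx i)
    intro s s' t
    rcases eq_or_ne s s' with rfl | hss
    · rfl
    have hs' : s' = s + 1 := by revert hss; revert s s'; decide
    subst hs'
    have h2a : ∀ u w : ZMod 2, u + 1 + (w + 1) = u + w := by decide
    have h2b : ∀ u w : ZMod 2, u + (w + 1) = u + 1 + w := by intro u w; ring
    refine Finset.card_bij' (fun k _ => k + x) (fun k _ => k + x) ?_ ?_ ?_ ?_
    · intro k hk
      simp only [Finset.mem_filter, Finset.mem_univ, true_and] at hk ⊢
      rw [← hk]
      funext i
      simp only [Pi.add_apply, Finset.sum_add_distrib, hx1 i, hx2 i, add_zero]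
      rw [h2a]
    · intro k hk
      simp only [Finset.mem_filter, Finset.mem_univ, true_and] at hk ⊢
      rw [← hk]
      funext i
      simp only [Pi.add_apply, Finset.sum_add_distrib, hx1 i, hx2 i, add_zero]
      rw [h2b]
    · intro k _; funext v; show k v + x v + x v = k v; rw [add_assoc, CharTwo.add_self_eq_zero, add_zero]
    · intro k _; funext v; show k v + x v + x v = k v; rw [add_assoc, CharTwo.add_self_eq_zero, add_zero]
end

section
/- GF(2) linear-algebra form of c-accessibility: let A be the adjacency matrix of a finite simple graph G over GF(2), and B ⊆ V. Then B is c-accessing iff there exists a vector x supported on B with Σ_v x(v) = 1 and (A x) supported on B. Dually, B is not c-accessing iff there exists y supported on V\B with (A y)(v) = 1 for all v ∈ B. Exactly one of these holds. -/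
variable {V : Type*} [Fintype V] [DecidableEq V]

private lemma zmod2_cast_one_iff {n : ℕ} : (n : ZMod 2) = 1 ↔ Odd n := by
  have h1 : ∀ a : ZMod 2, a = 1 ↔ ¬ a = 0 := by decide
  rw [h1, ZMod.natCast_eq_zero_iff, Nat.odd_iff]; omega

private lemma zmod2_cast_zero_iff {n : ℕ} : (n : ZMod 2) = 0 ↔ ¬ Odd n := by
  rw [ZMod.natCast_eq_zero_iff, Nat.odd_iff]; omega

private lemma mulVec_ind (G : SimpleGraph V) [DecidableRel G.Adj] (D : Finset V) (v : V) :
    (G.adjMatrix (ZMod 2)).mulVec (fun u => if u ∈ D then 1 else 0) v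
      = ((G.neighborFinset v ∩ D).card : ZMod 2) := by
  rw [SimpleGraph.adjMatrix_mulVec_apply, Finset.sum_ite_mem]
  simp

/-- The subspace of vectors vanishing on `B`. -/
private def vanishOn (B : Finset V) : Submodule (ZMod 2) (V → ZMod 2) where
  carrier := {z | ∀ v ∈ B, z v = 0}
  add_mem' hx hy v hv := by simp [hx v hv, hy v hv]
  zero_mem' v _ := rfl
  smul_mem' c x hx v hv := by simp [hx v hv]

private lemma single_mem_vanishOn {B : Finset V} {v : V} (hv : v ∉ B) :
    (Pi.single v 1 : V → ZMod 2) ∈ vanishOn B := by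
  intro u hu
  exact Pi.single_eq_of_ne (by rintro rfl; exact hv hu) _

theorem cAccessing_gf2 (G : SimpleGraph V) [DecidableRel G.Adj] (B : Finset V) :
    (cAccessing G B ↔ ∃ x : V → ZMod 2, (∀ v ∉ B, x v = 0) ∧ ∑ v, x v = 1 ∧
        ∀ v ∉ B, (G.adjMatrix (ZMod 2)).mulVec x v = 0) ∧
      (¬ cAccessing G B ↔ ∃ y : V → ZMod 2, (∀ v ∈ B, y v = 0) ∧
        ∀ v ∈ B, (G.adjMatrix (ZMod 2)).mulVec y v = 1) := by
  classical
  set A := G.adjMatrix (ZMod 2) with hA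
  -- Part 1
  have part1 : cAccessing G B ↔ ∃ x : V → ZMod 2, (∀ v ∉ B, x v = 0) ∧ ∑ v, x v = 1 ∧
      ∀ v ∉ B, A.mulVec x v = 0 := by
    constructor
    · rintro ⟨D, hDB, hodd, hnb⟩
      refine ⟨fun u => if u ∈ D then 1 else 0, ?_, ?_, ?_⟩
      · intro v hv
        have hvD : v ∉ D := fun h => hv (hDB h)
        simp [hvD]
      · rw [show (∑ v, (if v ∈ D then (1 : ZMod 2) else 0)) = ((D.card : ℕ) : ZMod 2) by
          rw [Finset.sum_ite_mem]; simp]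
        exact zmod2_cast_one_iff.2 hodd
      · intro v hv
        rw [hA, mulVec_ind]
        refine zmod2_cast_zero_iff.2 fun hoddc => hv (hnb ?_)
        simp [oddNbhd, hoddc]
    · rintro ⟨x, hsupp, hsum, hmv⟩
      set D := B.filter (fun v => x v = 1) with hD
      have hxval : ∀ v, x v = if v ∈ D then 1 else 0 := by
        intro v
        by_cases hvD : v ∈ D
        · simp [hvD, (Finset.mem_filter.1 hvD).2]
        · simp only [hvD, if_neg, if_false]
          by_cases hvB : v ∈ B
          · have : ¬ x v = 1 := fun h => hvD (Finset.mem_filter.2 ⟨hvB, h⟩)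
            revert this; generalize x v = a; revert a; decide
          · exact hsupp v hvB
      have hcard : ∀ v, A.mulVec x v = ((G.neighborFinset v ∩ D).card : ZMod 2) := by
        intro v
        rw [show x = (fun u => if u ∈ D then 1 else 0) from funext hxval, hA, mulVec_ind]
      refine ⟨D, Finset.filter_subset _ _, ?_, ?_⟩
      · rw [← zmod2_cast_one_iff, ← hsum]
        rw [show (∑ v, x v) = ∑ v, (if v ∈ D then (1 : ZMod 2) else 0) by
          exact Finset.sum_congr rfl fun v _ => hxval v]
        rw [Finset.sum_ite_mem]; simp
      · intro v hv
        simp only [oddNbhd, Finset.mem_filter] at hv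
        by_contra hvB
        have h0 := hmv v hvB
        rw [hcard v, zmod2_cast_zero_iff] at h0
        exact h0 hv.2
  refine ⟨part1, ?_⟩
  rw [part1]
  -- Part 2: Fredholm alternative via orthogonal complements
  set bf : LinearMap.BilinForm (ZMod 2) (V → ZMod 2) := Matrix.toBilin' 1 with hbf
  have hbf_apply : ∀ x y : V → ZMod 2, bf x y = dotProduct x y := by
    intro x y; rw [hbf, Matrix.toBilin'_apply', Matrix.one_mulVec]
  have hbf_nd : bf.Nondegenerate := by
    refine ⟨fun x hx => ?_, fun x hx => ?_⟩
    all_goals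
      funext v
      have := hx (Pi.single v 1)
      rw [hbf_apply] at this
      simpa [dotProduct_single, single_dotProduct] using this
  have hbf_refl : bf.IsRefl := by
    intro x y h
    rw [hbf_apply] at h ⊢
    rwa [dotProduct_comm]
  have hAsymm : ∀ y x : V → ZMod 2, dotProduct (A.mulVec y) x
      = dotProduct y (A.mulVec x) := by
    intro y x
    rw [Matrix.dotProduct_mulVec, ← Matrix.mulVec_transpose, hA,
      SimpleGraph.transpose_adjMatrix]
  set S : Submodule (ZMod 2) (V → ZMod 2) :=
    vanishOn B ⊔ (vanishOn B).map A.mulVecLin with hS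
  -- vanishing dot products
  have hdot_vanish : ∀ z x : V → ZMod 2, (∀ v ∈ B, z v = 0) → (∀ v ∉ B, x v = 0) →
      dotProduct z x = 0 := by
    intro z x hz hx
    apply Finset.sum_eq_zero
    intro v _
    by_cases hv : v ∈ B
    · simp [hz v hv]
    · simp [hx v hv]
  -- characterize the orthogonal of S
  have horth : ∀ x : V → ZMod 2, x ∈ bf.orthogonal S ↔
      ((∀ v ∉ B, x v = 0) ∧ ∀ v ∉ B, A.mulVec x v = 0) := by
    intro x
    constructor
    · intro hx
      constructor
      · intro v hv
        have h1 := hx (Pi.single v 1) (Submodule.mem_sup_left (single_mem_vanishOn hv))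
        rw [hbf_apply] at h1
        simpa [single_dotProduct] using h1
      · intro v hv
        have h1 := hx (A.mulVec (Pi.single v 1))
          (Submodule.mem_sup_right ⟨_, single_mem_vanishOn hv, rfl⟩)
        rw [hbf_apply, hAsymm] at h1
        simpa [single_dotProduct] using h1
    · rintro ⟨hx1, hx2⟩ n hn
      rw [hbf_apply]
      rw [hS, Submodule.mem_sup] at hn
      obtain ⟨z, hz, w, hw, rfl⟩ := hn
      obtain ⟨y, hy, rfl⟩ := hw
      rw [add_dotProduct]
      rw [hdot_vanish z x hz hx1, Matrix.mulVecLin_apply, hAsymm,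
        hdot_vanish y (A.mulVec x) hy hx2]
      simp
  -- indicator of B
  set w : V → ZMod 2 := fun v => if v ∈ B then 1 else 0 with hw
  -- membership of w in S ↔ RHS2
  have hmemS : w ∈ S ↔ ∃ y : V → ZMod 2, (∀ v ∈ B, y v = 0) ∧
      ∀ v ∈ B, A.mulVec y v = 1 := by
    rw [hS, Submodule.mem_sup]
    constructor
    · rintro ⟨z, hz, w', hw', hzw⟩
      obtain ⟨y, hy, rfl⟩ := hw'
      refine ⟨y, hy, fun v hv => ?_⟩
      have := congrFun hzw v
      rw [Matrix.mulVecLin_apply] at this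
      simp only [Pi.add_apply, hz v hv, zero_add] at this
      rw [this, hw]; simp [hv]
    · rintro ⟨y, hy, hAy⟩
      refine ⟨w - A.mulVec y, ?_, A.mulVecLin y, ⟨y, hy, rfl⟩, by simp⟩
      intro v hv
      simp [hw, hv, hAy v hv]
  rw [hmemS.symm]
  -- w ∈ S ↔ ¬ ∃ x ...
  rw [← LinearMap.BilinForm.orthogonal_orthogonal hbf_nd hbf_refl S,
    LinearMap.BilinForm.mem_orthogonal_iff]
  constructor
  · intro hne x hx
    rw [hbf_apply]
    have hx' := (horth x).2 ((horth x).1 hx)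
    rw [horth] at hx
    have hsum : dotProduct x w = ∑ v, x v := by
      rw [dotProduct]
      refine Finset.sum_congr rfl fun v _ => ?_
      by_cases hv : v ∈ B
      · simp [hw, hv]
      · simp [hw, hv, hx.1 v hv]
    rw [hsum]
    by_contra hne1
    have h1 : ∑ v, x v = 1 := by
      revert hne1; generalize (∑ v, x v) = a; revert a; decide
    exact hne ⟨x, hx.1, h1, hx.2⟩
  · rintro hall ⟨x, hsupp, hsum, hmv⟩
    have hx : x ∈ bf.orthogonal S := (horth x).2 ⟨hsupp, hmv⟩
    have := hall x hx
    rw [hbf_apply] at this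
    have hsum' : dotProduct x w = ∑ v, x v := by
      rw [dotProduct]
      refine Finset.sum_congr rfl fun v _ => ?_
      by_cases hv : v ∈ B
      · simp [hw, hv]
      · simp [hw, hv, hsupp v hv]
    rw [hsum', hsum] at this
    exact one_ne_zero this
end

section
/- If B is authorised in the GSS scheme on G (i.e. some function of B's shares always recovers the secret), then B is c-accessing. Equivalently (contrapositive of combining Theorem 1 with perfectness): no set that fails to be c-accessing admits a recovery function. -/
variable {V : Type*} [Fintype V] [DecidableEq V]

lemma zmod2_cases_s18 (c : ZMod 2) : c = 0 ∨ c = 1 := by revert c; decide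

lemma zmod2_natCast_eq_one_iff_odd (n : ℕ) : (n : ZMod 2) = 1 ↔ Odd n := by
  rw [Nat.odd_iff, ← ZMod.natCast_mod n 2]
  rcases Nat.mod_two_eq_zero_or_one n with h | h <;> rw [h] <;> simp

theorem authorised_cAccessing (G : SimpleGraph V) [DecidableRel G.Adj] (B : Finset V)
    (h : authorised G B) : cAccessing G B := by
  classical
  -- the linear map sending d to the "sums over neighbourhoods outside B"
  set T : (V → ZMod 2) →ₗ[ZMod 2] (↥B → ZMod 2) :=
    { toFun := fun d i => ∑ j ∈ G.neighborFinset i.1 \ B, d j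
      map_add' := by intro d e; funext i; simp [Finset.sum_add_distrib]
      map_smul' := by intro c d; funext i; simp [Finset.mul_sum] } with hT
  by_cases hr : (1 : ↥B → ZMod 2) ∈ LinearMap.range T
  · -- impossible: contradicts authorised
    exfalso
    obtain ⟨d, hd⟩ := hr
    obtain ⟨f, hf⟩ := h
    set k : V → ZMod 2 := fun j => if j ∈ B then 0 else d j with hk
    have h0 := hf 0 0
    have h1 := hf 1 k
    have heq : (fun i : ↥B => (k i.1, (1 : ZMod 2) + ∑ j ∈ G.neighborFinset i.1, k j))
        = (fun i : ↥B => ((0 : V → ZMod 2) i.1,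
            (0 : ZMod 2) + ∑ j ∈ G.neighborFinset i.1, (0 : V → ZMod 2) j)) := by
      funext i
      have hki : k i.1 = 0 := by simp [hk, i.2]
      have hsum : ∑ j ∈ G.neighborFinset i.1, k j = 1 := by
        have he : ∑ j ∈ G.neighborFinset i.1, k j
            = ∑ j ∈ G.neighborFinset i.1 \ B, d j := by
          rw [Finset.sdiff_eq_filter, Finset.sum_filter]
          apply Finset.sum_congr rfl
          intro j _
          by_cases hjB : j ∈ B <;> simp [hk, hjB]
        rw [he]
        have := congrFun hd i
        simpa [hT] using this
      rw [hki, hsum]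
      simp
      decide
    rw [heq, h0] at h1
    exact absurd h1 (by decide)
  · -- get a dual functional vanishing on the range and nonzero at 1
    obtain ⟨φ, hφ1, hφ0⟩ :=
      Submodule.exists_dual_map_eq_bot_of_notMem hr inferInstance
    set c : ↥B → ZMod 2 := fun i => φ (Pi.single i 1) with hc
    have hφ_eq : ∀ x : ↥B → ZMod 2, φ x = ∑ i, c i * x i := by
      intro x
      have hx : x = ∑ i, x i • Pi.single i (1 : ZMod 2) := by
        funext j
        simp [Pi.single_apply, Finset.sum_apply, mul_ite]
      conv_lhs => rw [hx]
      rw [map_sum]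
      apply Finset.sum_congr rfl
      intro i _
      rw [map_smul]
      simp [hc, mul_comm]
    have hφrange : ∀ d : V → ZMod 2, φ (T d) = 0 := by
      intro d
      have hm : φ (T d) ∈ (LinearMap.range T).map φ :=
        Submodule.mem_map_of_mem (LinearMap.mem_range_self T d)
      rw [hφ0] at hm
      exact (Submodule.mem_bot (ZMod 2)).mp hm
    set S : Finset ↥B := Finset.univ.filter (fun i => c i = 1) with hS
    refine ⟨S.map (Function.Embedding.subtype _), ?_, ?_, ?_⟩
    · intro v hv
      simp only [Finset.mem_map, Function.Embedding.coe_subtype] at hv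
      obtain ⟨i, _, rfl⟩ := hv
      exact i.2
    · rw [Finset.card_map, ← zmod2_natCast_eq_one_iff_odd]
      have h1 : φ 1 = (S.card : ZMod 2) := by
        rw [hφ_eq]
        simp only [Pi.one_apply, mul_one]
        rw [← Finset.sum_filter_add_sum_filter_not Finset.univ (fun i => c i = 1)]
        have hA : ∑ i ∈ Finset.univ.filter (fun i => c i = 1), c i = (S.card : ZMod 2) := by
          rw [Finset.sum_congr rfl (fun i hi => (Finset.mem_filter.mp hi).2)]
          simp [hS]
        have hBz : ∑ i ∈ Finset.univ.filter (fun i => ¬ c i = 1), c i = 0 := by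
          apply Finset.sum_eq_zero
          intro i hi
          have hne := (Finset.mem_filter.mp hi).2
          rcases zmod2_cases_s18 (c i) with h' | h'
          · exact h'
          · exact absurd h' hne
        rw [hA, hBz, add_zero]
      rw [← h1]
      rcases zmod2_cases_s18 (φ 1) with h' | h'
      · exact absurd h' hφ1
      · exact h'
    · intro v hv
      by_contra hvB
      simp only [oddNbhd, Finset.mem_filter] at hv
      have hodd := hv.2
      have hTd : ∀ i : ↥B, T (Pi.single v 1) i
          = if v ∈ G.neighborFinset i.1 then 1 else 0 := by
        intro i
        simp only [hT, LinearMap.coe_mk, AddHom.coe_mk]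
        rw [Finset.sum_pi_single']
        simp [Finset.mem_sdiff, hvB]
      have hzero := hφrange (Pi.single v 1)
      rw [hφ_eq] at hzero
      simp only [hTd] at hzero
      have hsum : ∑ i : ↥B, c i * (if v ∈ G.neighborFinset i.1 then (1 : ZMod 2) else 0)
          = ∑ i : ↥B, (if c i = 1 ∧ v ∈ G.neighborFinset i.1 then (1 : ZMod 2) else 0) := by
        apply Finset.sum_congr rfl
        intro i _
        rcases zmod2_cases_s18 (c i) with h' | h' <;>
          by_cases hvn : v ∈ G.neighborFinset i.1 <;> simp [h', hvn]
      rw [hsum, Finset.sum_boole] at hzero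
      -- identify the filter with the intersection
      have hcard : G.neighborFinset v ∩ S.map (Function.Embedding.subtype _)
          = (Finset.univ.filter (fun i : ↥B => c i = 1 ∧ v ∈ G.neighborFinset i.1)).map
              (Function.Embedding.subtype _) := by
        ext w
        simp only [Finset.mem_inter, Finset.mem_map, Finset.mem_filter, hS,
          Function.Embedding.coe_subtype, Finset.mem_univ, true_and]
        constructor
        · rintro ⟨hw1, i, hi, rfl⟩
          refine ⟨i, ⟨hi, ?_⟩, rfl⟩
          rw [SimpleGraph.mem_neighborFinset] at hw1 ⊢
          exact hw1.symm
        · rintro ⟨i, ⟨hi, hvn⟩, rfl⟩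
          refine ⟨?_, i, hi, rfl⟩
          rw [SimpleGraph.mem_neighborFinset] at hvn ⊢
          exact hvn.symm
      rw [hcard, Finset.card_map] at hodd
      have := (zmod2_natCast_eq_one_iff_odd _).mpr hodd
      rw [this] at hzero
      exact one_ne_zero hzero
end
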